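/- arXiv:1409.6943 — 4 statements merged into one kernel-verified Lean document; each statement's English description precedes it below -/
import Mathlib

section
/- Let C be a pretriangulated category with a t-structure (homologically indexed), let S be a set, and assume C has S-indexed products. Fix an integer r. Then the following are equivalent: (i) the functor X ↦ τ_{<r}X, regarded as an endofunctor of C, preserves S-indexed products; (ii) the functor X ↦ τ_{≥r}X, regarded as an endofunctor of C, preserves S-indexed products; (iii) for every S-indexed family of objects of C_{≥r}, its product in C belongs to C_{≥r}; (iv) the inclusion C_{≥r} ↪ C preserves S-indexed products. (This is the paper's Proposition 'limit-in-localization', in the t-structure instance with the class of diagrams taken to be S-indexed products; the proof uses that products of distinguished triangles are distinguished.) -/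
open CategoryTheory Category Limits Pretriangulated

universe v u

/-- A homologically indexed t-structure on a pretriangulated category, together with
its truncation functors `truncGE n` (coreflections onto `C_{≥ n}`) and
`truncLT n` (reflections onto `C_{< n} = C_{≤ n - 1}`). -/
structure HomologicalTStructure (C : Type u) [Category.{v} C] [Preadditive C]
    [HasZeroObject C] [HasShift C ℤ] [∀ (n : ℤ), (shiftFunctor C n).Additive]
    [Pretriangulated C] where
  /-- the subcategory `C_{≥ n}` -/
  GE (n : ℤ) : C → Prop
  /-- the subcategory `C_{≤ n}` (so that `C_{< n} = C_{≤ n - 1}`) -/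
  LE (n : ℤ) : C → Prop
  ge_iso (n : ℤ) {X Y : C} (e : X ≅ Y) : GE n X → GE n Y
  le_iso (n : ℤ) {X Y : C} (e : X ≅ Y) : LE n X → LE n Y
  ge_antitone {n m : ℤ} (h : n ≤ m) (X : C) : GE m X → GE n X
  le_monotone {n m : ℤ} (h : n ≤ m) (X : C) : LE n X → LE m X
  ge_shift (n : ℤ) (X : C) : GE n X ↔ GE (n + 1) (X⟦(1 : ℤ)⟧)
  le_shift (n : ℤ) (X : C) : LE n X ↔ LE (n + 1) (X⟦(1 : ℤ)⟧)
  hom_zero (n : ℤ) {X Y : C} (f : X ⟶ Y) : GE n X → LE (n - 1) Y → f = 0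
  /-- the truncation functor `τ_{≥ n}`, regarded as an endofunctor of `C` -/
  truncGE (n : ℤ) : C ⥤ C
  /-- the truncation functor `τ_{< n} = τ_{≤ n - 1}`, regarded as an endofunctor of `C` -/
  truncLT (n : ℤ) : C ⥤ C
  /-- the counit `τ_{≥ n} X ⟶ X` -/
  counit (n : ℤ) : truncGE n ⟶ 𝟭 C
  /-- the unit `X ⟶ τ_{< n} X` -/
  unit (n : ℤ) : 𝟭 C ⟶ truncLT n
  /-- the connecting morphism `τ_{< n} X ⟶ (τ_{≥ n} X)⟦1⟧` -/
  connecting (n : ℤ) : truncLT n ⟶ truncGE n ⋙ shiftFunctor C (1 : ℤ)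
  truncGE_mem (n : ℤ) (X : C) : GE n ((truncGE n).obj X)
  truncLT_mem (n : ℤ) (X : C) : LE (n - 1) ((truncLT n).obj X)
  triangle_dist (n : ℤ) (X : C) :
    Triangle.mk ((counit n).app X) ((unit n).app X) ((connecting n).app X) ∈ distTriang C


namespace HomologicalTStructure

variable {C : Type u} [Category.{v} C] [Preadditive C]
    [HasZeroObject C] [HasShift C ℤ] [∀ (n : ℤ), (shiftFunctor C n).Additive]
    [Pretriangulated C] (t : HomologicalTStructure C) (r : ℤ)

lemma le_shift_neg {X : C} (hX : t.LE (r - 1) X) : t.LE (r - 1) (X⟦(-1 : ℤ)⟧) := by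
  have e : (X⟦(-1 : ℤ)⟧)⟦(1 : ℤ)⟧ ≅ X :=
    (shiftFunctorCompIsoId C (-1 : ℤ) (1 : ℤ) (by ring)).app X
  have h1 : t.LE (r - 1) ((X⟦(-1 : ℤ)⟧)⟦(1 : ℤ)⟧) := t.le_iso (r - 1) e.symm hX
  have h2 : t.LE (r - 2) (X⟦(-1 : ℤ)⟧) := by
    rw [t.le_shift]
    have : r - 2 + 1 = r - 1 := by ring
    rw [this]
    exact h1
  exact t.le_monotone (by omega) _ h2

lemma ge_shift_one {X : C} (hX : t.GE r X) : t.GE r (X⟦(1 : ℤ)⟧) :=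
  t.ge_antitone (by omega) _ ((t.ge_shift r X).1 hX)

lemma cancel_mor₁ {T : Triangle C} (hT : T ∈ distTriang C) (h3 : t.LE (r - 1) T.obj₃)
    {Z : C} (hZ : t.GE r Z) (φ φ' : Z ⟶ T.obj₁)
    (h : φ ≫ T.mor₁ = φ' ≫ T.mor₁) : φ = φ' := by
  have h0 : (φ - φ') ≫ T.mor₁ = 0 := by rw [Preadditive.sub_comp, h, sub_self]
  obtain ⟨g, hg⟩ := Triangle.coyoneda_exact₂ _ (inv_rot_of_distTriang _ hT) (φ - φ') h0
  have hzero : g = 0 := t.hom_zero r g hZ (t.le_shift_neg r h3)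
  rw [hzero, zero_comp] at hg
  exact sub_eq_zero.1 hg

lemma mor₁_surj {T : Triangle C} (hT : T ∈ distTriang C) (h3 : t.LE (r - 1) T.obj₃)
    {Z : C} (hZ : t.GE r Z) (g : Z ⟶ T.obj₂) :
    ∃ φ : Z ⟶ T.obj₁, φ ≫ T.mor₁ = g := by
  obtain ⟨φ, hφ⟩ := Triangle.coyoneda_exact₂ _ hT g (t.hom_zero r _ hZ h3)
  exact ⟨φ, hφ.symm⟩

lemma cancel_mor₂ {T : Triangle C} (hT : T ∈ distTriang C) (h1 : t.GE r T.obj₁)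
    {W : C} (hW : t.LE (r - 1) W) (ψ ψ' : T.obj₃ ⟶ W)
    (h : T.mor₂ ≫ ψ = T.mor₂ ≫ ψ') : ψ = ψ' := by
  have h0 : T.mor₂ ≫ (ψ - ψ') = 0 := by rw [Preadditive.comp_sub, h, sub_self]
  obtain ⟨g, hg⟩ := Triangle.yoneda_exact₃ _ hT _ h0
  have hzero : g = 0 := t.hom_zero r g (t.ge_shift_one r h1) hW
  rw [hzero, comp_zero] at hg
  exact sub_eq_zero.1 hg

lemma mor₂_surj {T : Triangle C} (hT : T ∈ distTriang C) (h1 : t.GE r T.obj₁)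
    {W : C} (hW : t.LE (r - 1) W) (g : T.obj₂ ⟶ W) :
    ∃ ψ : T.obj₃ ⟶ W, T.mor₂ ≫ ψ = g := by
  obtain ⟨ψ, hψ⟩ := Triangle.yoneda_exact₂ _ hT g (t.hom_zero r _ h1 hW)
  exact ⟨ψ, hψ.symm⟩

lemma isZero_truncLT_obj {X : C} (hX : t.GE r X) : IsZero ((t.truncLT r).obj X) := by
  rw [IsZero.iff_id_eq_zero]
  apply t.cancel_mor₂ r (t.triangle_dist r X) (t.truncGE_mem r X) (t.truncLT_mem r X)
  show (t.unit r).app X ≫ 𝟙 _ = (t.unit r).app X ≫ 0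
  rw [comp_id, comp_zero]
  exact t.hom_zero r _ hX (t.truncLT_mem r X)

lemma isIso_counit_app {X : C} (hX : t.GE r X) : IsIso ((t.counit r).app X) :=
  (Triangle.isZero₃_iff_isIso₁ _ (t.triangle_dist r X)).1 (t.isZero_truncLT_obj r hX)

lemma le_prod {ι : Type w} (Y : ι → C) [HasProduct Y]
    [HasProduct (fun i => (t.truncGE r).obj (Y i))]
    (hY : ∀ i, t.LE (r - 1) (Y i)) : t.LE (r - 1) (∏ᶜ Y) := by
  have hc : (t.counit r).app (∏ᶜ Y) = 0 := by
    refine Pi.hom_ext _ _ (fun i => ?_)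
    rw [zero_comp]
    exact t.hom_zero r _ (t.truncGE_mem r _) (hY i)
  have hz : IsZero ((t.truncGE r).obj (∏ᶜ Y)) := by
    rw [IsZero.iff_id_eq_zero]
    apply t.cancel_mor₁ r (t.triangle_dist r (∏ᶜ Y)) (t.truncLT_mem r _) (t.truncGE_mem r _)
    show 𝟙 _ ≫ (t.counit r).app (∏ᶜ Y) = 0 ≫ (t.counit r).app (∏ᶜ Y)
    rw [id_comp, zero_comp, hc]
  have h2 : IsIso ((t.unit r).app (∏ᶜ Y)) :=
    (Triangle.isZero₁_iff_isIso₂ _ (t.triangle_dist r (∏ᶜ Y))).1 hz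
  exact t.le_iso (r - 1) (asIso ((t.unit r).app (∏ᶜ Y))).symm (t.truncLT_mem r _)

lemma comparison_GE {ι : Type w} (f : ι → C) [HasProduct f]
    [HasProduct (fun i => (t.truncGE r).obj (f i))] :
    piComparison (t.truncGE r) f ≫ Limits.Pi.map (f := fun i => (t.truncGE r).obj (f i)) (g := f) (fun i => (t.counit r).app (f i)) =
      (t.counit r).app (∏ᶜ f) := by
  refine Pi.hom_ext _ _ (fun i => ?_)
  rw [assoc, Pi.map_π, ← assoc, piComparison_comp_π]
  exact (t.counit r).naturality (Pi.π f i)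

lemma comparison_LT {ι : Type w} (f : ι → C) [HasProduct f]
    [HasProduct (fun i => (t.truncLT r).obj (f i))] :
    (t.unit r).app (∏ᶜ f) ≫ piComparison (t.truncLT r) f =
      Limits.Pi.map (f := f) (g := fun i => (t.truncLT r).obj (f i)) (fun i => (t.unit r).app (f i)) := by
  refine Pi.hom_ext _ _ (fun i => ?_)
  rw [assoc, piComparison_comp_π, Pi.map_π]
  simpa using ((t.unit r).naturality (Pi.π f i)).symm

end HomologicalTStructure

/-- for a fixed `r` and a set `S` such that `C` has `S`-indexed products,
the following are equivalent: (i) `τ_{< r}` preserves `S`-indexed products;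
(ii) `τ_{≥ r}` preserves `S`-indexed products; (iii) `C_{≥ r}` is closed under `S`-indexed
products in `C`; (iv) the inclusion `C_{≥ r} ↪ C` preserves `S`-indexed products. -/
theorem limit_in_localization_products {C : Type u} [Category.{v} C] [Preadditive C]
    [HasZeroObject C] [HasShift C ℤ] [∀ (n : ℤ), (shiftFunctor C n).Additive]
    [Pretriangulated C] (t : HomologicalTStructure C)
    (S : Type w) [HasLimitsOfShape (Discrete S) C] (r : ℤ) :
    [Nonempty (PreservesLimitsOfShape (Discrete S) (t.truncLT r)),
     Nonempty (PreservesLimitsOfShape (Discrete S) (t.truncGE r)),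
     ∀ f : S → C, (∀ i, t.GE r (f i)) → t.GE r (∏ᶜ f),
     Nonempty (PreservesLimitsOfShape (Discrete S)
       (ObjectProperty.ι (t.GE r)))].TFAE := by
  tfae_have 3 → 2 := by
    intro h3
    refine ⟨?_⟩
    have : ∀ f : S → C, PreservesLimit (Discrete.functor f) (t.truncGE r) := by
      intro f
      have ha := t.comparison_GE r f
      have hGEprod : t.GE r (∏ᶜ fun i => (t.truncGE r).obj (f i)) :=
        h3 _ (fun i => t.truncGE_mem r (f i))
      obtain ⟨b, hb⟩ : ∃ b : (∏ᶜ fun i => (t.truncGE r).obj (f i)) ⟶ (t.truncGE r).obj (∏ᶜ f),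
          b ≫ (t.counit r).app (∏ᶜ f) = Limits.Pi.map (f := fun i => (t.truncGE r).obj (f i)) (g := f) (fun i => (t.counit r).app (f i)) := t.mor₁_surj r (t.triangle_dist r (∏ᶜ f)) (t.truncLT_mem r _)
        hGEprod (Limits.Pi.map (f := fun i => (t.truncGE r).obj (f i)) (g := f) (fun i => (t.counit r).app (f i)))
      have hb' : b ≫ (t.counit r).app (∏ᶜ f) = Limits.Pi.map (f := fun i => (t.truncGE r).obj (f i)) (g := f) (fun i => (t.counit r).app (f i)) := hb
      have hab : piComparison (t.truncGE r) f ≫ b = 𝟙 _ := by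
        apply t.cancel_mor₁ r (t.triangle_dist r (∏ᶜ f)) (t.truncLT_mem r _) (t.truncGE_mem r _)
        show _ ≫ (t.counit r).app (∏ᶜ f) = 𝟙 _ ≫ (t.counit r).app (∏ᶜ f)
        rw [assoc, hb', ha, id_comp]
      have hba : b ≫ piComparison (t.truncGE r) f = 𝟙 _ := by
        refine Pi.hom_ext _ _ (fun i => ?_)
        apply t.cancel_mor₁ r (t.triangle_dist r (f i)) (t.truncLT_mem r (f i)) hGEprod
        show _ ≫ (t.counit r).app (f i) = _ ≫ (t.counit r).app (f i)
        rw [id_comp, assoc, assoc, ← assoc (piComparison (t.truncGE r) f), piComparison_comp_π]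
        have hnat := (t.counit r).naturality (Pi.π f i)
        dsimp at hnat
        rw [hnat, ← assoc, hb', Pi.map_π]
      have : IsIso (piComparison (t.truncGE r) f) := ⟨b, hab, hba⟩
      exact PreservesProduct.of_iso_comparison _ f
    exact preservesLimitsOfShape_of_discrete _
  tfae_have 3 → 1 := by
    intro h3
    refine ⟨?_⟩
    have : ∀ f : S → C, PreservesLimit (Discrete.functor f) (t.truncLT r) := by
      intro f
      have hc := t.comparison_LT r f
      let Tfam := fun i => Triangle.mk ((t.counit r).app (f i)) ((t.unit r).app (f i))
        ((t.connecting r).app (f i))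
      have hPT : productTriangle Tfam ∈ distTriang C :=
        productTriangle_distinguished _ (fun i => t.triangle_dist r (f i))
      have h1PT : t.GE r ((productTriangle Tfam).obj₁) :=
        h3 _ (fun i => t.truncGE_mem r (f i))
      have h3PT : t.LE (r - 1) (∏ᶜ fun i => (t.truncLT r).obj (f i)) :=
        t.le_prod r _ (fun i => t.truncLT_mem r (f i))
      obtain ⟨d, hd⟩ : ∃ d : (productTriangle Tfam).obj₃ ⟶ (t.truncLT r).obj (∏ᶜ f),
          (productTriangle Tfam).mor₂ ≫ d = (t.unit r).app (∏ᶜ f) := t.mor₂_surj r hPT h1PT (t.truncLT_mem r (∏ᶜ f))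
        ((t.unit r).app (∏ᶜ f) : (productTriangle Tfam).obj₂ ⟶ (t.truncLT r).obj (∏ᶜ f))
      have hd' : Limits.Pi.map (f := f) (g := fun i => (t.truncLT r).obj (f i))
          (fun i => (t.unit r).app (f i)) ≫ d = (t.unit r).app (∏ᶜ f) := hd
      have hcd : piComparison (t.truncLT r) f ≫ d = 𝟙 _ := by
        apply t.cancel_mor₂ r (t.triangle_dist r (∏ᶜ f)) (t.truncGE_mem r _) (t.truncLT_mem r _)
        show (t.unit r).app (∏ᶜ f) ≫ _ = (t.unit r).app (∏ᶜ f) ≫ 𝟙 _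
        erw [comp_id, ← assoc, hc, hd']
      have hdc : d ≫ piComparison (t.truncLT r) f = 𝟙 _ := by
        apply t.cancel_mor₂ r hPT h1PT h3PT
        erw [comp_id, ← assoc, hd]
        exact hc
      have : IsIso (piComparison (t.truncLT r) f) := ⟨d, hcd, hdc⟩
      exact PreservesProduct.of_iso_comparison _ f
    exact preservesLimitsOfShape_of_discrete _
  tfae_have 1 → 3 := by
    rintro ⟨h1⟩ f hf
    have hz : IsZero (∏ᶜ fun i => (t.truncLT r).obj (f i)) := by
      rw [IsZero.iff_id_eq_zero]
      refine Pi.hom_ext _ _ (fun i => ?_)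
      exact (t.isZero_truncLT_obj r (hf i)).eq_of_tgt _ _
    have hzP : IsZero ((t.truncLT r).obj (∏ᶜ f)) :=
      hz.of_iso (asIso (piComparison (t.truncLT r) f))
    have hiso : IsIso ((t.counit r).app (∏ᶜ f)) :=
      (Triangle.isZero₃_iff_isIso₁ _ (t.triangle_dist r (∏ᶜ f))).1 hzP
    exact t.ge_iso r (asIso ((t.counit r).app (∏ᶜ f))) (t.truncGE_mem r _)
  tfae_have 2 → 3 := by
    rintro ⟨h2⟩ f hf
    have ha := t.comparison_GE r f
    have : ∀ i, IsIso ((t.counit r).app (f i)) := fun i => t.isIso_counit_app r (hf i)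
    have : IsIso (Limits.Pi.map (f := fun i => (t.truncGE r).obj (f i)) (g := f)
        (fun i => (t.counit r).app (f i))) := by
      refine ⟨Limits.Pi.map (fun i => inv ((t.counit r).app (f i))), ?_, ?_⟩ <;>
        refine Pi.hom_ext _ _ (fun i => ?_) <;>
          simp [limMap_π, Discrete.natTrans_app]
    have hiso : IsIso ((t.counit r).app (∏ᶜ f)) := by
      rw [← ha]; infer_instance
    exact t.ge_iso r (asIso ((t.counit r).app (∏ᶜ f))) (t.truncGE_mem r _)
  tfae_have 3 → 4 := by
    intro h3
    have hcl : ObjectProperty.IsClosedUnderLimitsOfShape (C := C) (t.GE r) (Discrete S) := by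
      refine ⟨fun X ⟨h⟩ => ?_⟩
      have hprod : t.GE r (∏ᶜ fun s => h.diag.obj ⟨s⟩) := h3 _ (fun s => h.prop_diag_obj ⟨s⟩)
      exact t.ge_iso r
        (((HasLimit.isoOfNatIso (Discrete.natIsoFunctor (F := h.diag))).symm :
          _ ≅ limit h.diag) ≪≫ (limit.isLimit h.diag).conePointUniqueUpToIso h.isLimit) hprod
    have := createsLimitsOfShapeFullSubcategoryInclusion (P := t.GE r) (J := Discrete S)
    exact ⟨inferInstance⟩
  tfae_have 4 → 3 := by
    rintro ⟨h4⟩ f hf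
    have key : ∀ (Z : C), t.GE r Z → ∀ (p : ∀ i, Z ⟶ f i),
        ∃! m : Z ⟶ (t.truncGE r).obj (∏ᶜ f),
          ∀ i, m ≫ ((t.counit r).app (∏ᶜ f) ≫ Pi.π f i) = p i := by
      intro Z hZ p
      obtain ⟨φ, hφ⟩ : ∃ φ : Z ⟶ (t.truncGE r).obj (∏ᶜ f), φ ≫ (t.counit r).app (∏ᶜ f) = Pi.lift p := t.mor₁_surj r (t.triangle_dist r (∏ᶜ f)) (t.truncLT_mem r _) hZ
        (Pi.lift p)
      have hφ' : φ ≫ (t.counit r).app (∏ᶜ f) = Pi.lift p := hφ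
      refine ⟨φ, fun i => ?_, fun m hm => ?_⟩
      · rw [← assoc, hφ', limit.lift_π]
        rfl
      · apply t.cancel_mor₁ r (t.triangle_dist r (∏ᶜ f)) (t.truncLT_mem r _) hZ
        show m ≫ (t.counit r).app (∏ᶜ f) = φ ≫ (t.counit r).app (∏ᶜ f)
        rw [hφ']
        refine Pi.hom_ext _ _ (fun i => ?_)
        rw [assoc, limit.lift_π]
        exact hm i
    let g : S → ObjectProperty.FullSubcategory (t.GE r) := fun i => ⟨f i, hf i⟩
    let V : ObjectProperty.FullSubcategory (t.GE r) := ⟨(t.truncGE r).obj (∏ᶜ f), t.truncGE_mem r _⟩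
    let fan : Fan g := Fan.mk V
      (fun i => ObjectProperty.homMk ((t.counit r).app (∏ᶜ f) ≫ Pi.π f i : V.obj ⟶ (g i).obj))
    have hfan : IsLimit fan := by
      refine mkFanLimit _ (fun s => ObjectProperty.homMk (key s.pt.1 s.pt.2 (fun i => (s.proj i).hom)).exists.choose)
        (fun s j => ?_) (fun s m hm => ?_)
      · exact ObjectProperty.hom_ext _ ((key s.pt.1 s.pt.2 (fun i => (s.proj i).hom)).exists.choose_spec j)
      · exact ObjectProperty.hom_ext _ ((key s.pt.1 s.pt.2 (fun i => (s.proj i).hom)).unique (fun i => congrArg (·.hom) (hm i))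
          ((key s.pt.1 s.pt.2 (fun i => (s.proj i).hom)).exists.choose_spec))
    have hm := isLimitOfPreserves (ObjectProperty.ι (t.GE r)) hfan
    let cP : Cone (Discrete.functor g ⋙ ObjectProperty.ι (t.GE r)) :=
      { pt := ∏ᶜ f
        π := Discrete.natTrans (fun i => (Pi.π f i.as : ∏ᶜ f ⟶ (g i.as).obj)) }
    let j : ∏ᶜ f ⟶ (t.truncGE r).obj (∏ᶜ f) := hm.lift cP
    have hj : j ≫ (t.counit r).app (∏ᶜ f) = 𝟙 (∏ᶜ f) := by
      refine Pi.hom_ext _ _ (fun i => ?_)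
      have hfac := hm.fac cP ⟨i⟩
      dsimp [cP, fan] at hfac
      rw [assoc, id_comp]
      exact hfac
    have hj2 : (t.counit r).app (∏ᶜ f) ≫ j = 𝟙 _ := by
      apply hm.hom_ext
      rintro ⟨i⟩
      have hfac := hm.fac cP ⟨i⟩
      dsimp [cP, fan] at hfac ⊢
      rw [id_comp, assoc, hfac]
    have : IsIso ((t.counit r).app (∏ᶜ f)) := ⟨j, hj2, hj⟩
    exact t.ge_iso r (asIso ((t.counit r).app (∏ᶜ f))) (t.truncGE_mem r _)
  tfae_finish
end

section
/- Let C be a monoidal category with all small colimits whose tensor product preserves small colimits in each variable, and let 𝒜 be the category of filtered objects of C with the Day-convolution tensor product (X ⊗ Y)_n = colim_{i+j ≥ n} X_i ⊗ Y_j. If r, s are integers, X ∈ 𝒜_{≥r} and Y ∈ 𝒜_{≥s}, then X ⊗ Y ∈ 𝒜_{≥r+s}; that is, for every n ≤ r+s the structure map (X ⊗ Y)_{r+s} → (X ⊗ Y)_n is an isomorphism. (This is the paper's Proposition 'filtered-objects-monoidal': the symmetric monoidal structure on filtered objects is compatible with the filtration; the proof identifies the colimit over {i+j ≥ n} as a left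 Kan extension of its restriction to {i ≥ r, j ≥ s}.) -/
open CategoryTheory Category Limits MonoidalCategory Opposite

universe v u

/-- A filtered object of `C` is a diagram `⋯ ⟵ X_n ⟵ X_{n+1} ⟵ ⋯`, i.e. a functor
`ℤᵒᵖ ⥤ C`. -/
abbrev FilteredObj (C : Type u) [Category.{v} C] := ℤᵒᵖ ⥤ C

/-- A filtered object `X` lies in `𝒜_{≥ r}` if all the structure maps `X_r ⟶ X_n`,
`n ≤ r`, are isomorphisms. -/
def IsGeFil {C : Type u} [Category.{v} C] (r : ℤ) (X : FilteredObj C) : Prop :=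
  ∀ (n : ℤ) (h : n ≤ r), IsIso (X.map (homOfLE h).op)

variable {C : Type u} [Category.{v} C] [MonoidalCategory C] [HasColimits C]

/-- The indexing poset `{(i, j) : ℤ × ℤ | i + j ≥ n}` for the Day convolution. -/
abbrev ConvIndex (n : ℤ) : Type := {p : ℤ × ℤ // n ≤ p.1 + p.2}

/-- The diagram `(i, j) ↦ X_i ⊗ Y_j` on `{(i, j) | i + j ≥ n}`, contravariant since the
structure maps go from larger `(i, j)` to smaller ones. -/
@[simps] noncomputable def convDiag (X Y : FilteredObj C) (n : ℤ) : (ConvIndex n)ᵒᵖ ⥤ C where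
  obj p := X.obj (op p.unop.1.1) ⊗ Y.obj (op p.unop.1.2)
  map {p q} f :=
    X.map (homOfLE (show q.unop.1.1 ≤ p.unop.1.1 from (leOfHom f.unop).1)).op ⊗ₘ
      Y.map (homOfLE (show q.unop.1.2 ≤ p.unop.1.2 from (leOfHom f.unop).2)).op
  map_id p := by
    simp only [homOfLE_refl, op_id, CategoryTheory.Functor.map_id, id_tensorHom_id]
  map_comp {p q w} f g := by
    rw [tensorHom_comp_tensorHom, ← X.map_comp, ← Y.map_comp, ← op_comp, ← op_comp,
      homOfLE_comp, homOfLE_comp]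

/-- The Day convolution of two filtered objects, in level `n`:
`(X ⊗ Y)_n = colim_{i+j ≥ n} X_i ⊗ Y_j`. -/
noncomputable def conv (X Y : FilteredObj C) (n : ℤ) : C :=
  colimit (convDiag X Y n)

/-- The structure map `(X ⊗ Y)_m ⟶ (X ⊗ Y)_n` for `n ≤ m`, induced by the inclusion
`{i + j ≥ m} ⊆ {i + j ≥ n}` of indexing posets. -/
noncomputable def convMap (X Y : FilteredObj C) {n m : ℤ} (h : n ≤ m) :
    conv X Y m ⟶ conv X Y n :=
  colimit.desc (convDiag X Y m)
    { pt := conv X Y n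
      ι :=
        { app := fun p => colimit.ι (convDiag X Y n) (op ⟨p.unop.1, h.trans p.unop.2⟩)
          naturality := by
            intro p q f
            simp only [Functor.const_obj_map]
            exact (colimit.w (convDiag X Y n)
              ((homOfLE (show (⟨q.unop.1, h.trans q.unop.2⟩ : ConvIndex n) ≤
                ⟨p.unop.1, h.trans p.unop.2⟩ from leOfHom f.unop)).op)).trans
              (Category.comp_id _).symm } }


section ConvAux

variable {C : Type u} [Category.{v} C] [MonoidalCategory C] [HasColimits C]

/-- If `X ∈ 𝒜_{≥ r}` then every structure map between levels `≤ r` is an isomorphism. -/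
lemma isIso_map_of_le {r : ℤ} {X : FilteredObj C} (hX : IsGeFil r X)
    {a b : ℤ} (hab : a ≤ b) (hbr : b ≤ r) : IsIso (X.map (homOfLE hab).op) := by
  haveI := hX b hbr
  haveI : IsIso (X.map (homOfLE hbr).op ≫ X.map (homOfLE hab).op) := by
    rw [← X.map_comp, ← op_comp, homOfLE_comp]
    exact hX a (hab.trans hbr)
  exact IsIso.of_isIso_comp_left (X.map (homOfLE hbr).op) _

lemma isIso_map_max {r : ℤ} {X : FilteredObj C} (hX : IsGeFil r X) (i : ℤ) :
    IsIso (X.map (homOfLE (le_max_left i r)).op) := by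
  rcases le_total i r with h | h
  · exact isIso_map_of_le hX _ (max_le h le_rfl)
  · have e : max i r = i := max_eq_left h
    rw [show (homOfLE (le_max_left i r)).op =
      eqToHom (by rw [e]) from Subsingleton.elim _ _]
    infer_instance

variable (r s : ℤ) {n : ℤ} (X Y : FilteredObj C)

/-- Push an index `(i, j)` with `i + j ≥ n` up to `(max i r, max j s)`. -/
def pmax (p : ConvIndex n) : ConvIndex (r + s) :=
  ⟨(max p.1.1 r, max p.1.2 s), add_le_add (le_max_right _ _) (le_max_right _ _)⟩

/-- The comparison map `X_{max i r} ⊗ Y_{max j s} ⟶ X_i ⊗ Y_j`. -/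
noncomputable def cmpMap (p : ConvIndex n) :
    (convDiag X Y (r + s)).obj (op (pmax r s p)) ⟶ (convDiag X Y n).obj (op p) :=
  X.map (homOfLE (le_max_left p.1.1 r)).op ⊗ₘ Y.map (homOfLE (le_max_left p.1.2 s)).op

lemma isIso_cmpMap {X Y : FilteredObj C} (hX : IsGeFil r X) (hY : IsGeFil s Y)
    (p : ConvIndex n) : IsIso (cmpMap r s X Y p) := by
  haveI := isIso_map_max hX p.1.1
  haveI := isIso_map_max hY p.1.2
  exact inferInstanceAs (IsIso
    (MonoidalCategory.tensorHom (X.map (homOfLE (le_max_left p.1.1 r)).op)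
      (Y.map (homOfLE (le_max_left p.1.2 s)).op)))

lemma pmax_mono {p q : ConvIndex n} (hpq : p ≤ q) : pmax r s p ≤ pmax r s q :=
  ⟨max_le_max hpq.1 le_rfl, max_le_max hpq.2 le_rfl⟩

lemma cmp_key {p q : ConvIndex n} (hpq : p ≤ q) :
    cmpMap r s X Y q ≫ (convDiag X Y n).map (homOfLE hpq).op =
      (convDiag X Y (r + s)).map (homOfLE (pmax_mono r s hpq)).op ≫ cmpMap r s X Y p := by
  dsimp [cmpMap, convDiag]
  erw [tensorHom_comp_tensorHom, tensorHom_comp_tensorHom, ← X.map_comp, ← Y.map_comp, ← X.map_comp, ← Y.map_comp]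
  rfl

end ConvAux

/-- if `X ∈ 𝒜_{≥ r}` and `Y ∈ 𝒜_{≥ s}`, then `X ⊗ Y ∈ 𝒜_{≥ r+s}`: for every
`n ≤ r + s` the structure map `(X ⊗ Y)_{r+s} ⟶ (X ⊗ Y)_n` is an isomorphism. -/
theorem conv_isGeFil {C : Type u} [Category.{v} C] [MonoidalCategory C] [HasColimits C]
    [∀ Z : C, PreservesColimits (tensorLeft Z)]
    [∀ Z : C, PreservesColimits (tensorRight Z)]
    (r s : ℤ) (X Y : FilteredObj C) (hX : IsGeFil r X) (hY : IsGeFil s Y) :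
    ∀ (n : ℤ) (h : n ≤ r + s), IsIso (convMap X Y h) := by
  intro n h
  haveI : ∀ p : ConvIndex n, IsIso (cmpMap r s X Y p) := fun p => isIso_cmpMap r s hX hY p
  refine ⟨colimit.desc (convDiag X Y n)
    { pt := conv X Y (r + s)
      ι :=
        { app := fun p =>
            inv (cmpMap r s X Y p.unop) ≫ colimit.ι (convDiag X Y (r + s)) (op (pmax r s p.unop))
          naturality := by
            intro p q f
            have hpq : q.unop ≤ p.unop := leOfHom f.unop
            have hf : f = (homOfLE hpq).op := Subsingleton.elim _ _
            have key := cmp_key r s X Y hpq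
            have hw := colimit.w (convDiag X Y (r + s)) (homOfLE (pmax_mono r s hpq)).op
            have heq : (convDiag X Y n).map (homOfLE hpq).op ≫ inv (cmpMap r s X Y q.unop) =
                inv (cmpMap r s X Y p.unop) ≫
                  (convDiag X Y (r + s)).map (homOfLE (pmax_mono r s hpq)).op := by
              rw [IsIso.comp_inv_eq, Category.assoc, ← key, IsIso.inv_hom_id_assoc]
            simp only [Functor.const_obj_map, hf]
            have := heq =≫ colimit.ι (convDiag X Y (r + s)) (op (pmax r s q.unop))
            simp only [Category.assoc, hw] at this
            refine this.trans ?_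
            exact (Category.comp_id _).symm } }, ?_, ?_⟩
  · apply colimit.hom_ext
    intro p
    dsimp only [conv]
    erw [Category.comp_id, convMap, colimit.ι_desc_assoc]
    dsimp only
    erw [colimit.ι_desc]
    dsimp only
    set q : ConvIndex n := ⟨p.unop.1, h.trans p.unop.2⟩ with hq
    have hle : p.unop ≤ pmax r s q := ⟨le_max_left _ _, le_max_left _ _⟩
    have hw := colimit.w (convDiag X Y (r + s)) (homOfLE hle).op
    have hmap : (convDiag X Y (r + s)).map (homOfLE hle).op = cmpMap r s X Y q := rfl
    rw [hmap] at hw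
    erw [IsIso.inv_comp_eq, hw]
  · apply colimit.hom_ext
    intro p
    dsimp only [conv]
    erw [Category.comp_id, colimit.ι_desc_assoc]
    dsimp only
    erw [Category.assoc, convMap, colimit.ι_desc]
    dsimp only
    set q : ConvIndex n := ⟨(pmax r s p.unop).1, h.trans (pmax r s p.unop).2⟩ with hq
    have hle : p.unop ≤ q := ⟨le_max_left _ _, le_max_left _ _⟩
    have hw := colimit.w (convDiag X Y n) (homOfLE hle).op
    have hmap : (convDiag X Y n).map (homOfLE hle).op = cmpMap r s X Y p.unop := rfl
    rw [hmap] at hw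
    erw [IsIso.inv_comp_eq, hw]
end

section
/- Let C be a monoidal category with all small colimits whose tensor product preserves small colimits in each variable, and let 𝒜 be the category of filtered objects of C with the Day-convolution tensor product (X ⊗ Y)_n = colim_{i+j ≥ n} X_i ⊗ Y_j. If X ∈ 𝒜_{≥∞} (every structure map X_{n+1} → X_n is an isomorphism), then for every filtered object Y, X ⊗ Y ∈ 𝒜_{≥∞}: every structure map (X ⊗ Y)_{n+1} → (X ⊗ Y)_n is an isomorphism. (This is the paper's Proposition 'complete-objects-monoidal', which shows the monoidal structure on filtered objects is completable.) -/
open CategoryTheory Category Limits MonoidalCategory Opposite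

universe v u

variable {C : Type u} [Category.{v} C] [MonoidalCategory C] [HasColimits C]

/-- Composing two structure maps of a filtered object. -/
lemma FilteredObj.map_map {C : Type u} [Category.{v} C] (X : FilteredObj C) {a b c : ℤ}
    (h1 : a ≤ b) (h2 : b ≤ c) :
    X.map (homOfLE h2).op ≫ X.map (homOfLE h1).op = X.map (homOfLE (h1.trans h2)).op := by
  rw [← X.map_comp, ← op_comp, homOfLE_comp]

lemma ι_convMap (X Y : FilteredObj C) {n m : ℤ} (h : n ≤ m) (p : (ConvIndex m)ᵒᵖ) :
    colimit.ι (convDiag X Y m) p ≫ convMap X Y h =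
      colimit.ι (convDiag X Y n) (op ⟨p.unop.1, h.trans p.unop.2⟩) :=
  colimit.ι_desc _ _

/-- The candidate inverse `(X ⊗ Y)_n ⟶ (X ⊗ Y)_{n+1}`, defined using inverses of the
structure maps of `X`. -/
noncomputable def convInv (X : FilteredObj C)
    (hX : ∀ n : ℤ, IsIso (X.map (homOfLE (lt_add_one n).le).op))
    (Y : FilteredObj C) (n : ℤ) : conv X Y n ⟶ conv X Y (n + 1) :=
  colimit.desc (convDiag X Y n)
    { pt := conv X Y (n + 1)
      ι :=
        { app := fun p =>
            letI := hX p.unop.1.1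
            (inv (X.map (homOfLE (lt_add_one p.unop.1.1).le).op) ⊗ₘ 𝟙 _) ≫
              colimit.ι (convDiag X Y (n + 1))
                (op ⟨(p.unop.1.1 + 1, p.unop.1.2), by
                  have := p.unop.2; dsimp at this ⊢; omega⟩)
          naturality := by
            intro p q f
            letI := hX p.unop.1.1
            letI := hX q.unop.1.1
            have h1 : q.unop.1.1 ≤ p.unop.1.1 := (leOfHom f.unop).1
            have h2 : q.unop.1.2 ≤ p.unop.1.2 := (leOfHom f.unop).2
            have hle : (⟨(q.unop.1.1 + 1, q.unop.1.2), by
                  have := q.unop.2; dsimp at this ⊢; omega⟩ : ConvIndex (n + 1)) ≤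
                ⟨(p.unop.1.1 + 1, p.unop.1.2), by
                  have := p.unop.2; dsimp at this ⊢; omega⟩ :=
              Prod.mk_le_mk.mpr ⟨by omega, h2⟩
            dsimp only [Functor.const_obj_obj, Functor.const_obj_map]
            rw [comp_id, ← colimit.w (convDiag X Y (n + 1)) (homOfLE hle).op]
            erw [convDiag_map]
            erw [← assoc, ← assoc, tensorHom_comp_tensorHom, tensorHom_comp_tensorHom]
            congr 2
            · rw [IsIso.comp_inv_eq, assoc, IsIso.eq_inv_comp,
                FilteredObj.map_map, FilteredObj.map_map]
            · rw [id_comp, comp_id] } }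

lemma ι_convInv (X : FilteredObj C)
    (hX : ∀ n : ℤ, IsIso (X.map (homOfLE (lt_add_one n).le).op))
    (Y : FilteredObj C) (n : ℤ) (p : (ConvIndex n)ᵒᵖ) :
    letI := hX p.unop.1.1
    colimit.ι (convDiag X Y n) p ≫ convInv X hX Y n =
      (inv (X.map (homOfLE (lt_add_one p.unop.1.1).le).op) ⊗ₘ 𝟙 _) ≫
        colimit.ι (convDiag X Y (n + 1))
          (op ⟨(p.unop.1.1 + 1, p.unop.1.2), by
            have := p.unop.2; dsimp at this ⊢; omega⟩) :=
  colimit.ι_desc _ _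

/-- if `X ∈ 𝒜_{≥ ∞}` (every structure map `X_{n+1} ⟶ X_n` is an
isomorphism) then for every filtered object `Y`, `X ⊗ Y ∈ 𝒜_{≥ ∞}`: every structure map
`(X ⊗ Y)_{n+1} ⟶ (X ⊗ Y)_n` is an isomorphism. -/
theorem conv_complete {C : Type u} [Category.{v} C] [MonoidalCategory C] [HasColimits C]
    [∀ Z : C, PreservesColimits (tensorLeft Z)]
    [∀ Z : C, PreservesColimits (tensorRight Z)]
    (X : FilteredObj C) (hX : ∀ n : ℤ, IsIso (X.map (homOfLE (lt_add_one n).le).op)) :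
    ∀ (Y : FilteredObj C) (n : ℤ), IsIso (convMap X Y (lt_add_one n).le) := by
  intro Y n
  refine ⟨convInv X hX Y n, ?_, ?_⟩
  · apply colimit.hom_ext
    intro p
    letI := hX p.unop.1.1
    erw [← assoc]; rw [ι_convMap]; erw [ι_convInv]; erw [comp_id]
    have hmem : (n : ℤ) + 1 ≤ (p.unop.1.1 + 1) + p.unop.1.2 := by
      have := p.unop.2; omega
    have hle : p.unop ≤ (⟨(p.unop.1.1 + 1, p.unop.1.2), hmem⟩ : ConvIndex (n + 1)) :=
      Subtype.coe_le_coe.mp (Prod.le_def.mpr ⟨(lt_add_one _).le, le_refl _⟩)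
    rw [← colimit.w (convDiag X Y (n + 1)) (homOfLE hle).op]; erw [← assoc]
    erw [convDiag_map]
    erw [tensorHom_comp_tensorHom, IsIso.inv_hom_id, id_comp, show (homOfLE (le_refl p.unop.1.2)).op = 𝟙 _ from rfl,
      Y.map_id, id_tensorHom_id, id_comp]
  · apply colimit.hom_ext
    intro p
    letI := hX p.unop.1.1
    erw [← assoc]; rw [ι_convInv]; erw [comp_id]; erw [assoc, ι_convMap]
    have hmem : (n : ℤ) ≤ (p.unop.1.1 + 1) + p.unop.1.2 := by
      have := p.unop.2; omega
    have hle : p.unop ≤ (⟨(p.unop.1.1 + 1, p.unop.1.2), hmem⟩ : ConvIndex n) :=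
      Subtype.coe_le_coe.mp (Prod.le_def.mpr ⟨(lt_add_one _).le, le_refl _⟩)
    rw [← colimit.w (convDiag X Y n) (homOfLE hle).op]; erw [← assoc]
    erw [convDiag_map]
    erw [tensorHom_comp_tensorHom, IsIso.inv_hom_id, id_comp, show (homOfLE (le_refl p.unop.1.2)).op = 𝟙 _ from rfl,
      Y.map_id, id_tensorHom_id]
    erw [id_comp]
end

section
/- Let C be a category with sequential (ℕᵒᵖ-indexed) limits and let 𝒜 be the category of filtered objects of C. Suppose given an inverse system ⋯ ← X^{(i)} ← X^{(i+1)} ← ⋯ (i ∈ ℕ) in 𝒜 and a sequence of integers (r_i) tending to ∞ such that X^{(i)} ∈ 𝒜_{≥ r_i} for every i. Then the levelwise limit L, with L_n = lim_i X^{(i)}_n, belongs to 𝒜_{≥∞}: every structure map L_{n+1} → L_n is an isomorphism. (This is the paper's Lemma 'vanishing-completion' in the instance of the filtered category of filtered objects, where 𝒜_{≥∞} is exactly the kernel of the completion functor.) -/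
open CategoryTheory Category Limits Opposite

universe v u

/-- The shift functor `ℕ ⥤ ℕ`, `i ↦ i + N`. -/
def shiftFun (N : ℕ) : ℕ ⥤ ℕ :=
  Monotone.functor (f := fun i => i + N) (fun _ _ h => Nat.add_le_add_right h N)

instance shiftFun_final (N : ℕ) : (shiftFun N).Final := by
  apply Functor.final_of_exists_of_isFiltered
  · intro d
    exact ⟨d, ⟨homOfLE (Nat.le_add_right d N)⟩⟩
  · intro d c s s'
    exact ⟨c, 𝟙 _, rfl⟩

/-- If a natural transformation between `ℕᵒᵖ`-indexed diagrams is an isomorphism on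
all sufficiently large indices, then the induced map on limits is an isomorphism. -/
theorem isIso_limMap_of_eventually {C : Type u} [Category.{v} C] [HasLimitsOfShape ℕᵒᵖ C]
    {F G : ℕᵒᵖ ⥤ C} (α : F ⟶ G) (N : ℕ) (h : ∀ i : ℕ, N ≤ i → IsIso (α.app (op i))) :
    IsIso (limMap α) := by
  let e : ℕᵒᵖ ⥤ ℕᵒᵖ := (shiftFun N).op
  have he : e.Initial := inferInstance
  have key : limMap α ≫ limit.pre G e = limit.pre F e ≫ limMap (Functor.whiskerLeft e α) := by
    ext j
    simp
  haveI : ∀ j : ℕᵒᵖ, IsIso ((Functor.whiskerLeft e α).app j) :=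
    fun j => h _ (Nat.le_add_left N j.unop)
  haveI : IsIso (Functor.whiskerLeft e α) := NatIso.isIso_of_isIso_app _
  haveI : IsIso (limMap (Functor.whiskerLeft e α)) :=
    (lim : (ℕᵒᵖ ⥤ C) ⥤ C).map_isIso (Functor.whiskerLeft e α)
  have h2 : IsIso (limit.pre F e ≫ limMap (Functor.whiskerLeft e α)) := by
    infer_instance
  rw [← key] at h2
  exact IsIso.of_isIso_comp_right _ (limit.pre G e)

/-- let `C` have sequential (ℕᵒᵖ-indexed) limits, and let
`⋯ ⟵ X⁽ⁱ⁾ ⟵ X⁽ⁱ⁺¹⁾ ⟵ ⋯` be an inverse system of filtered objects such that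
`X⁽ⁱ⁾ ∈ 𝒜_{≥ r_i}` for a sequence of integers `r_i → ∞`. Then the (levelwise) limit
belongs to `𝒜_{≥ ∞}`: each of its structure maps `L_{n+1} ⟶ L_n` is an isomorphism. -/
theorem limit_of_inverse_system_is_complete {C : Type u} [Category.{v} C]
    [HasLimitsOfShape ℕᵒᵖ C] (D : ℕᵒᵖ ⥤ FilteredObj C) (r : ℕ → ℤ)
    (hr : Filter.Tendsto r Filter.atTop Filter.atTop)
    (hD : ∀ i : ℕ, IsGeFil (r i) (D.obj (op i))) :
    ∀ n : ℤ, IsIso ((limit D).map (homOfLE (lt_add_one n).le).op) := by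
  intro n
  obtain ⟨N, hN⟩ := (Filter.tendsto_atTop.mp hr (n + 1)).exists_forall_of_atTop
  set f : op (n + 1) ⟶ op n := (homOfLE (lt_add_one n).le).op
  have key : (limit D).map f ≫ (limitObjIsoLimitCompEvaluation _ _).hom =
      (limitObjIsoLimitCompEvaluation _ _).hom ≫
        limMap (Functor.whiskerLeft _ ((evaluation _ _).map f)) :=
    limit_map_limitObjIsoLimitCompEvaluation_hom D f
  have hiso : IsIso (limMap (Functor.whiskerLeft D ((evaluation ℤᵒᵖ C).map f))) := by
    apply isIso_limMap_of_eventually _ N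
    intro i hi
    have h1 : n ≤ r i := le_trans (le_of_lt (lt_add_one n)) (hN i hi)
    have h2 : n + 1 ≤ r i := hN i hi
    have i1 : IsIso ((D.obj (op i)).map (homOfLE h1).op) := hD i n h1
    have i2 : IsIso ((D.obj (op i)).map (homOfLE h2).op) := hD i (n + 1) h2
    have comp : (D.obj (op i)).map (homOfLE h1).op =
        (D.obj (op i)).map (homOfLE h2).op ≫ (D.obj (op i)).map f := by
      rw [← Functor.map_comp]
      rfl
    rw [comp] at i1
    have : IsIso ((D.obj (op i)).map f) := IsIso.of_isIso_comp_left ((D.obj (op i)).map (homOfLE h2).op) _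
    exact this
  have h3 : IsIso ((limit D).map f ≫ (limitObjIsoLimitCompEvaluation _ _).hom) := by
    rw [key]; infer_instance
  exact IsIso.of_isIso_comp_right _ (limitObjIsoLimitCompEvaluation D (op n)).hom
end
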